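/- Let p ≥ 2, let f : ℝ^d → ℝ be differentiable and L-smooth w.r.t. ‖·‖_p, let y ∈ ℝ^d, and let x⁺ be a minimizer over x ∈ ℝ^d of the map x ↦ ⟨∇f(y), x − y⟩ + L‖x − y‖_p². Then ⟨∇f(x⁺), y − x⁺⟩ ≥ L‖x⁺ − y‖_p². -/

import Mathlib

open scoped BigOperators
open scoped InnerProductSpace

/-- The `ℓ_p` "norm" on `ℝ^d` for a real exponent `p`. -/
noncomputable def pnorm (p : ℝ) {d : ℕ} (x : EuclideanSpace ℝ (Fin d)) : ℝ :=
  (∑ i, |x i| ^ p) ^ (1 / p)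

/-- The dual exponent `p* = p/(p-1)`, so that `1/p + 1/p* = 1`. -/
noncomputable def dualExp (p : ℝ) : ℝ := p / (p - 1)

lemma pnorm_nonneg (p : ℝ) {d : ℕ} (x : EuclideanSpace ℝ (Fin d)) : 0 ≤ pnorm p x :=
  Real.rpow_nonneg (Finset.sum_nonneg fun i _ => Real.rpow_nonneg (abs_nonneg _) _) _

lemma pnorm_smul {p : ℝ} (hp : 0 < p) {d : ℕ} (s : ℝ) (x : EuclideanSpace ℝ (Fin d)) :
    pnorm p (s • x) = |s| * pnorm p x := by
  unfold pnorm
  have h1 : ∀ i : Fin d, |(s • x) i| ^ p = |s| ^ p * |x i| ^ p := by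
    intro i
    rw [PiLp.smul_apply, smul_eq_mul, abs_mul, Real.mul_rpow (abs_nonneg _) (abs_nonneg _)]
  simp only [h1, ← Finset.mul_sum]
  rw [Real.mul_rpow (Real.rpow_nonneg (abs_nonneg _) _)
    (Finset.sum_nonneg fun i _ => Real.rpow_nonneg (abs_nonneg _) _),
    ← Real.rpow_mul (abs_nonneg _), mul_one_div, div_self hp.ne', Real.rpow_one]

lemma pnorm_eq_zero {p : ℝ} (hp : 0 < p) {d : ℕ} {x : EuclideanSpace ℝ (Fin d)}
    (h : pnorm p x = 0) : x = 0 := by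
  unfold pnorm at h
  have hS : (∑ i : Fin d, |x i| ^ p) = 0 := by
    by_contra hne
    have hpos : 0 < ∑ i : Fin d, |x i| ^ p :=
      lt_of_le_of_ne (Finset.sum_nonneg fun i _ => Real.rpow_nonneg (abs_nonneg _) _)
        (Ne.symm hne)
    exact absurd h (ne_of_gt (Real.rpow_pos_of_pos hpos _))
  have := (Finset.sum_eq_zero_iff_of_nonneg
    (fun i _ => Real.rpow_nonneg (abs_nonneg (x i)) p)).mp hS
  ext i
  have hi := this i (Finset.mem_univ i)
  have : |x i| = 0 := by
    by_contra hne
    have : 0 < |x i| := lt_of_le_of_ne (abs_nonneg _) (Ne.symm hne)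
    exact absurd hi (ne_of_gt (Real.rpow_pos_of_pos this _))
  simpa using abs_eq_zero.mp this

lemma pnorm_holder {p : ℝ} (hp : 1 < p) {d : ℕ} (v u : EuclideanSpace ℝ (Fin d)) :
    ⟪v, u⟫_ℝ ≤ pnorm (dualExp p) v * pnorm p u := by
  have hpq : Real.HolderConjugate p (dualExp p) := Real.HolderConjugate.conjExponent hp
  have h := Real.inner_le_Lp_mul_Lq (s := Finset.univ) (f := fun i => v i) (g := fun i => u i) hpq.symm
  have hinner : ⟪v, u⟫_ℝ = ∑ i : Fin d, v i * u i := by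
    simp [PiLp.inner_apply, RCLike.inner_apply, mul_comm]
  rw [hinner]
  exact h

theorem stmt1 {d : ℕ} (p L : ℝ) (hp : 2 ≤ p) (hL : 0 < L)
    (f : EuclideanSpace ℝ (Fin d) → ℝ) (hf : Differentiable ℝ f)
    (hsmooth : ∀ x y : EuclideanSpace ℝ (Fin d),
      pnorm (dualExp p) (gradient f y - gradient f x) ≤ L * pnorm p (y - x))
    (y xp : EuclideanSpace ℝ (Fin d))
    (hxp : ∀ x : EuclideanSpace ℝ (Fin d),
      ⟪gradient f y, xp - y⟫_ℝ + L * pnorm p (xp - y) ^ 2 ≤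
      ⟪gradient f y, x - y⟫_ℝ + L * pnorm p (x - y) ^ 2) :
    ⟪gradient f xp, y - xp⟫_ℝ ≥ L * pnorm p (xp - y) ^ 2 := by
  have hp1 : (1:ℝ) < p := by linarith
  have hp0 : (0:ℝ) < p := by linarith
  set g := gradient f y with hg
  set u : EuclideanSpace ℝ (Fin d) := xp - y with hu
  set t := pnorm p u with ht
  have ht0 : 0 ≤ t := pnorm_nonneg p u
  -- key scaling inequality
  have key : ∀ s : ℝ, s < 1 → ⟪g, u⟫_ℝ ≤ -(s + 1) * (L * t ^ 2) := by
    intro s hs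
    have h := hxp (y + s • u)
    have h1 : (y + s • u) - y = s • u := by abel
    rw [h1] at h
    have h2 : pnorm p (s • u) = |s| * t := pnorm_smul hp0 s u
    have h3 : ⟪g, s • u⟫_ℝ = s * ⟪g, u⟫_ℝ := real_inner_smul_right g u s
    rw [h2, h3] at h
    have h4 : (|s| * t) ^ 2 = s ^ 2 * t ^ 2 := by
      rw [mul_pow, sq_abs]
    rw [h4] at h
    -- h : ⟪g,u⟫ + L t² ≤ s⟪g,u⟫ + L (s² t²)
    have hs1 : 0 < 1 - s := by linarith
    nlinarith [h, hs1]
  -- conclude first-order condition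
  have foc : ⟪g, u⟫_ℝ ≤ -2 * (L * t ^ 2) := by
    rcases eq_or_lt_of_le ht0 with h0 | htpos
    · have := key 0 (by norm_num)
      simp only [← h0] at this ⊢
      linarith [this]
    · apply le_of_forall_pos_le_add
      intro ε hε
      have hLt : 0 < L * t ^ 2 := mul_pos hL (pow_pos htpos 2)
      have := key (1 - ε / (L * t ^ 2)) (by linarith [div_pos hε hLt])
      have heq : -((1 - ε / (L * t ^ 2)) + 1) * (L * t ^ 2) = -2 * (L * t ^ 2) + ε := by
        field_simp
        ring
      linarith [this, heq.le, heq.ge]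
  -- Hölder + smoothness
  have hsm := hsmooth y xp
  have hhold := pnorm_holder hp1 (gradient f xp - g) u
  have hholder : ⟪gradient f xp - g, u⟫_ℝ ≤ L * t * t := by
    calc ⟪gradient f xp - g, u⟫_ℝ ≤ pnorm (dualExp p) (gradient f xp - g) * pnorm p u := hhold
    _ ≤ (L * t) * t := mul_le_mul_of_nonneg_right (by simpa [← hu, ← ht] using hsm) ht0
  have hsplit : ⟪gradient f xp, y - xp⟫_ℝ = -⟪gradient f xp - g, u⟫_ℝ - ⟪g, u⟫_ℝ := by
    have hyx : y - xp = -u := by simp [hu]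
    rw [hyx, inner_neg_right, inner_sub_left]
    ring
  rw [hsplit]
  nlinarith [hholder, foc]
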